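/- Let p_0,...,p_n ∈ [-1,1] be distinct nodes with Lagrange basis polynomials l_j, and set w_j = ∫_{-1}^{1} l_j(x) dx. If the quadrature rule Q(f) = ∑_{j=0}^n w_j f(p_j) is exact for all polynomials of degree at most 2n+1, then the nodes p_j are the roots of the degree-(n+1) orthogonal polynomial with respect to Lebesgue measure on [-1,1] (i.e., the Legendre polynomial of degree n+1 up to normalization). -/
import Mathlib


/-- The Lagrange basis polynomial `l_j(x) = ∏_{h ≠ j} (x - p_h)/(p_j - p_h)`. -/
noncomputable def lagBasis {n : ℕ} (p : Fin (n+1) → ℝ) (j : Fin (n+1)) : Polynomial ℝ :=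
  ∏ h ∈ Finset.univ.filter (fun h => h ≠ j),
    Polynomial.C ((p j - p h)⁻¹) * (Polynomial.X - Polynomial.C (p h))

/-- If the interpolatory quadrature rule with distinct nodes
`p_0,…,p_n ∈ [-1,1]` and weights `w_j = ∫_{-1}^1 l_j` is exact for all polynomials of
degree at most `2n+1`, then the node polynomial `∏_j (X - p_j)` is orthogonal in
`L²([-1,1])` to all polynomials of degree at most `n`; i.e. the nodes are the roots of
the degree-`(n+1)` orthogonal (Legendre, up to normalization) polynomial. -/
theorem quadrature_exact_implies_legendre_nodes (n : ℕ) (p : Fin (n+1) → ℝ)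
    (hinj : Function.Injective p) (hmem : ∀ j, p j ∈ Set.Icc (-1:ℝ) 1)
    (w : Fin (n+1) → ℝ)
    (hw : ∀ j, w j = ∫ x in (-1:ℝ)..1, (lagBasis p j).eval x)
    (hexact : ∀ Q : Polynomial ℝ, Q.natDegree ≤ 2*n+1 →
      ∫ x in (-1:ℝ)..1, Q.eval x = ∑ j, w j * Q.eval (p j)) :
    ∀ Q : Polynomial ℝ, Q.natDegree ≤ n →
      ∫ x in (-1:ℝ)..1, (∏ j, (Polynomial.X - Polynomial.C (p j))).eval x * Q.eval x = 0 := by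
  intro Q hQ
  set N : Polynomial ℝ := ∏ j, (Polynomial.X - Polynomial.C (p j)) with hN
  have hNdeg : N.natDegree ≤ n + 1 := by
    refine le_trans (Polynomial.natDegree_prod_le _ _) ?_
    have h1 : ∑ j : Fin (n+1), (Polynomial.X - Polynomial.C (p j)).natDegree
        ≤ ∑ _j : Fin (n+1), 1 :=
      Finset.sum_le_sum (fun j _ => Polynomial.natDegree_X_sub_C_le (p j))
    simpa using h1
  have hdeg : (N * Q).natDegree ≤ 2 * n + 1 := by
    refine le_trans (Polynomial.natDegree_mul_le) ?_
    omega
  have h := hexact (N * Q) hdeg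
  have hroot : ∀ j, N.eval (p j) = 0 := by
    intro j
    rw [hN, Polynomial.eval_prod]
    exact Finset.prod_eq_zero (Finset.mem_univ j) (by simp)
  simp only [Polynomial.eval_mul] at h
  rw [h]
  refine Finset.sum_eq_zero fun j _ => by rw [hroot j]; ring
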